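/- For every constant c₁ > 0 there exists a constant c₂ > 0 such that the following holds. Let V be a finite type, G a simple graph on V, and d a natural number with 1 ≤ d and the maximum degree of G at most d. Let p : V → EuclideanSpace ℝ (Fin 3) be an injective map with p v 2 = 0 for every v, and suppose the planar straight-line drawing given by p has angular resolution at least c₁/d, i.e., for every vertex v and distinct neighbors u, w of v, the angle between p u − p v and p w − p v is at least c₁/d. Let n denote the unit vector (0,0,1). Then there exists an assignment α : Sym2 V → ℝ with α e ∈ [0, π/4] for all e, such that for every vertex v and every pair of distinct neighbors u, w of v, the vectors T(v,u) = cos(α ⟦(v,u)⟧) • (‖p u − p v‖⁻¹ • (p u − p v)) + sin(α ⟦(v,u)⟧) • n and the analogously defined T(v,w) form an angle of at least c₂/√d. -/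

import Mathlib

open Real InnerProductGeometry

/-- The unit tangent vector at `p v` of the circular arc drawn over the
segment from `p v` to `p u` in the vertical plane through the two
endpoints, making angle `α s(v, u)` with the base plane. -/
noncomputable def arcTangentVec {V : Type*} (p : V → EuclideanSpace ℝ (Fin 3))
    (α : Sym2 V → ℝ) (nvec : EuclideanSpace ℝ (Fin 3)) (v u : V) :
    EuclideanSpace ℝ (Fin 3) :=
  Real.cos (α s(v, u)) • (‖p u - p v‖⁻¹ • (p u - p v)) +
    Real.sin (α s(v, u)) • nvec


section TrigAux

lemma myAux.le_angle {A B : ℝ} (hB0 : 0 ≤ B) (hAπ : A ≤ π)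
    (h : Real.cos B ≤ Real.cos A) : A ≤ B := by
  by_contra hc
  push_neg at hc
  exact absurd h (not_le.mpr (Real.cos_lt_cos_of_nonneg_of_le_pi hB0 hAπ hc))

lemma myAux.fract_dist {x y t : ℝ} (ht0 : 0 < t) (ht : t ≤ 1/2)
    (h : (∃ k : ℤ, x - y - t = k) ∨ (∃ k : ℤ, x - y + t = k)) :
    t ≤ |Int.fract x - Int.fract y| := by
  have hx0 := Int.fract_nonneg x
  have hx1 := Int.fract_lt_one x
  have hy0 := Int.fract_nonneg y
  have hy1 := Int.fract_lt_one y
  have hfx : Int.fract x = x - ⌊x⌋ := rfl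
  have hfy : Int.fract y = y - ⌊y⌋ := rfl
  rcases h with ⟨k, hk⟩ | ⟨k, hk⟩
  · set j : ℤ := k - ⌊x⌋ + ⌊y⌋ with hj
    have hD : Int.fract x - Int.fract y - t = (j : ℝ) := by
      rw [hfx, hfy]; push_cast [hj]; linarith
    have h1 : (j : ℝ) < 1 := by linarith
    have h2 : (-2 : ℝ) < (j : ℝ) := by linarith
    have h1' : j ≤ 0 := by exact_mod_cast Int.lt_add_one_iff.mp (by exact_mod_cast h1)
    have h2' : (-1 : ℤ) ≤ j := by
      have : (-2 : ℤ) < j := by exact_mod_cast h2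
      omega
    interval_cases j
    · rw [le_abs]; right; push_cast at hD; linarith
    · rw [le_abs]; left; push_cast at hD; linarith
  · set j : ℤ := k - ⌊x⌋ + ⌊y⌋ with hj
    have hD : Int.fract x - Int.fract y + t = (j : ℝ) := by
      rw [hfx, hfy]; push_cast [hj]; linarith
    have h1 : (j : ℝ) < 2 := by linarith
    have h2 : (-1 : ℝ) < (j : ℝ) := by linarith
    have h1' : j ≤ 1 := by exact_mod_cast Int.lt_add_one_iff.mp (by exact_mod_cast h1)
    have h2' : (0 : ℤ) ≤ j := by
      have : (-1 : ℤ) < j := by exact_mod_cast h2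
      omega
    interval_cases j
    · rw [le_abs]; right; push_cast at hD; linarith
    · rw [le_abs]; left; push_cast at hD; linarith

end TrigAux


variable {F : Type*} [NormedAddCommGroup F] [InnerProductSpace ℝ F]

lemma myAux.norm_tangent (u nv : F) (h1 : ‖u‖ = 1) (hn : ‖nv‖ = 1)
    (ho : inner ℝ u nv = (0 : ℝ)) (a : ℝ) :
    ‖Real.cos a • u + Real.sin a • nv‖ = 1 := by
  have h : ‖Real.cos a • u + Real.sin a • nv‖ ^ 2 = 1 := by
    rw [norm_add_sq_real, norm_smul, norm_smul, real_inner_smul_left, real_inner_smul_right,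
      ho, h1, hn]
    simp [mul_pow, sq_abs]
  nlinarith [norm_nonneg (Real.cos a • u + Real.sin a • nv)]

lemma myAux.inner_tangent (u₁ u₂ nv : F) (hn : ‖nv‖ = 1)
    (ho1 : inner ℝ u₁ nv = (0 : ℝ)) (ho2 : inner ℝ u₂ nv = (0 : ℝ)) (a₁ a₂ : ℝ) :
    inner ℝ (Real.cos a₁ • u₁ + Real.sin a₁ • nv) (Real.cos a₂ • u₂ + Real.sin a₂ • nv)
      = Real.cos a₁ * Real.cos a₂ * inner ℝ u₁ u₂ + Real.sin a₁ * Real.sin a₂ := by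
  have hnn : inner ℝ nv nv = (1 : ℝ) := by
    rw [real_inner_self_eq_norm_mul_norm, hn]; norm_num
  have h21 : inner ℝ nv u₂ = (0 : ℝ) := by rw [real_inner_comm]; exact ho2
  simp only [inner_add_left, inner_add_right, real_inner_smul_left, real_inner_smul_right,
    ho1, h21, hnn]
  ring

lemma myAux.cos_angle_tangent (u₁ u₂ nv : F) (h1 : ‖u₁‖ = 1) (h2 : ‖u₂‖ = 1) (hn : ‖nv‖ = 1)
    (ho1 : inner ℝ u₁ nv = (0 : ℝ)) (ho2 : inner ℝ u₂ nv = (0 : ℝ)) (a₁ a₂ : ℝ) :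
    Real.cos (angle (Real.cos a₁ • u₁ + Real.sin a₁ • nv) (Real.cos a₂ • u₂ + Real.sin a₂ • nv))
      = Real.cos a₁ * Real.cos a₂ * Real.cos (angle u₁ u₂) + Real.sin a₁ * Real.sin a₂ := by
  rw [cos_angle, myAux.norm_tangent u₁ nv h1 hn ho1, myAux.norm_tangent u₂ nv h2 hn ho2,
    myAux.inner_tangent u₁ u₂ nv hn ho1 ho2, cos_angle, h1, h2]
  norm_num

lemma myAux.tangent_bounds (u₁ u₂ nv : F) (h1 : ‖u₁‖ = 1) (h2 : ‖u₂‖ = 1) (hn : ‖nv‖ = 1)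
    (ho1 : inner ℝ u₁ nv = (0 : ℝ)) (ho2 : inner ℝ u₂ nv = (0 : ℝ)) {a₁ a₂ : ℝ}
    (ha₁ : a₁ ∈ Set.Icc 0 (π/4)) (ha₂ : a₂ ∈ Set.Icc 0 (π/4)) :
    |a₁ - a₂| ≤ angle (Real.cos a₁ • u₁ + Real.sin a₁ • nv) (Real.cos a₂ • u₂ + Real.sin a₂ • nv)
    ∧ angle u₁ u₂ / 2
      ≤ angle (Real.cos a₁ • u₁ + Real.sin a₁ • nv) (Real.cos a₂ • u₂ + Real.sin a₂ • nv) := by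
  obtain ⟨ha₁0, ha₁1⟩ := ha₁
  obtain ⟨ha₂0, ha₂1⟩ := ha₂
  have hπ := Real.pi_pos
  have hc₁0 : Real.sqrt 2 / 2 ≤ Real.cos a₁ := by
    rw [← Real.cos_pi_div_four]
    exact Real.cos_le_cos_of_nonneg_of_le_pi ha₁0 (by linarith) ha₁1
  have hc₂0 : Real.sqrt 2 / 2 ≤ Real.cos a₂ := by
    rw [← Real.cos_pi_div_four]
    exact Real.cos_le_cos_of_nonneg_of_le_pi ha₂0 (by linarith) ha₂1
  have hs2 : Real.sqrt 2 ^ 2 = 2 := Real.sq_sqrt (by norm_num)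
  have hs2' : (0:ℝ) ≤ Real.sqrt 2 := Real.sqrt_nonneg 2
  have hcc : (2:ℝ)⁻¹ ≤ Real.cos a₁ * Real.cos a₂ := by nlinarith
  have hccpos : (0:ℝ) ≤ Real.cos a₁ * Real.cos a₂ := by nlinarith
  have hθ0 := angle_nonneg u₁ u₂
  have hθπ := angle_le_pi u₁ u₂
  have hcθ1 : Real.cos (angle u₁ u₂) ≤ 1 := Real.cos_le_one _
  have hcosT := myAux.cos_angle_tangent u₁ u₂ nv h1 h2 hn ho1 ho2 a₁ a₂
  have hT0 := angle_nonneg (Real.cos a₁ • u₁ + Real.sin a₁ • nv)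
    (Real.cos a₂ • u₂ + Real.sin a₂ • nv)
  have hTπ := angle_le_pi (Real.cos a₁ • u₁ + Real.sin a₁ • nv)
    (Real.cos a₂ • u₂ + Real.sin a₂ • nv)
  constructor
  · apply myAux.le_angle hT0 (show |a₁ - a₂| ≤ π by rw [abs_le]; constructor <;> linarith)
    rw [hcosT, Real.cos_abs, Real.cos_sub]
    nlinarith
  · apply myAux.le_angle hT0 (show angle u₁ u₂ / 2 ≤ π by linarith)
    rw [hcosT]
    have hhalf : Real.cos (angle u₁ u₂ / 2) ^ 2 = 1/2 + Real.cos (angle u₁ u₂) / 2 := by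
      rw [Real.cos_sq]; ring_nf
    have hhalf0 : 0 ≤ Real.cos (angle u₁ u₂ / 2) :=
      Real.cos_nonneg_of_mem_Icc ⟨by linarith, by linarith⟩
    have hhalf1 : Real.cos (angle u₁ u₂ / 2) ≤ 1 := Real.cos_le_one _
    have hcosd : Real.cos a₁ * Real.cos a₂ + Real.sin a₁ * Real.sin a₂ = Real.cos (a₁ - a₂) :=
      (Real.cos_sub a₁ a₂).symm
    have h1' : Real.cos (a₁ - a₂) ≤ 1 := Real.cos_le_one _
    nlinarith [Real.cos_le_one (angle u₁ u₂)]


noncomputable def myAux.toC (x : EuclideanSpace ℝ (Fin 3)) : ℂ := x 0 + x 1 * Complex.I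

namespace myAux

@[simp] lemma toC_re (x : EuclideanSpace ℝ (Fin 3)) : (toC x).re = x 0 := by simp [toC]

@[simp] lemma toC_im (x : EuclideanSpace ℝ (Fin 3)) : (toC x).im = x 1 := by simp [toC]

lemma toC_neg (x : EuclideanSpace ℝ (Fin 3)) : toC (-x) = -toC x := by
  apply Complex.ext <;> simp [PiLp.neg_apply]

lemma toC_eq_zero {x : EuclideanSpace ℝ (Fin 3)} (h2 : x 2 = 0) (h : toC x = 0) : x = 0 := by
  have h0 : x 0 = 0 := by rw [← toC_re x, h]; simp
  have h1 : x 1 = 0 := by rw [← toC_im x, h]; simp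
  ext i
  fin_cases i <;> simpa

lemma abs_toC {x : EuclideanSpace ℝ (Fin 3)} (h2 : x 2 = 0) : ‖toC x‖ = ‖x‖ := by
  rw [Complex.norm_def, EuclideanSpace.norm_eq]
  congr 1
  rw [Complex.normSq_apply]
  simp [Fin.sum_univ_three, h2, Real.norm_eq_abs, sq_abs]
  ring

lemma inner_toC (x y : EuclideanSpace ℝ (Fin 3)) (hx : x 2 = 0) :
    (inner ℝ x y : ℝ) = (toC x).re * (toC y).re + (toC x).im * (toC y).im := by
  simp [PiLp.inner_apply, RCLike.inner_apply, Fin.sum_univ_three, hx, mul_comm]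

lemma cos_angle_eq_cos_arg_sub {x y : EuclideanSpace ℝ (Fin 3)}
    (hx : x ≠ 0) (hy : y ≠ 0) (hx2 : x 2 = 0) (hy2 : y 2 = 0) :
    Real.cos (angle x y) = Real.cos (Complex.arg (toC x) - Complex.arg (toC y)) := by
  have hzx : toC x ≠ 0 := fun h => hx (toC_eq_zero hx2 h)
  have hzy : toC y ≠ 0 := fun h => hy (toC_eq_zero hy2 h)
  have hax : ‖toC x‖ ≠ 0 := by simpa using hzx
  have hay : ‖toC y‖ ≠ 0 := by simpa using hzy
  rw [cos_angle, Real.cos_sub, Complex.cos_arg hzx, Complex.cos_arg hzy,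
    Complex.sin_arg, Complex.sin_arg, inner_toC x y hx2, ← abs_toC hx2, ← abs_toC hy2]
  field_simp

end myAux

set_option maxHeartbeats 2000000 in
/-- Theorem 5 of the paper: for every `c₁ > 0` there is a `c₂ > 0` such
that any straight-line drawing in the base plane `z = 0` of a graph `G`
of maximum degree at most `d ≥ 1`, with angular resolution at least
`c₁ / d`, can be lifted (keeping the same vertex positions, every arc
projecting perpendicularly onto its segment) to a 3D arc diagram with
angular resolution at least `c₂ / √d`. -/
theorem exists_arc_diagram_from_good_resolution_drawing :
    ∀ c₁ : ℝ, 0 < c₁ →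
      ∃ c₂ : ℝ, 0 < c₂ ∧
        ∀ (V : Type) [Fintype V] (G : SimpleGraph V) [DecidableRel G.Adj]
          (d : ℕ), 1 ≤ d → G.maxDegree ≤ d →
          ∀ p : V → EuclideanSpace ℝ (Fin 3), Function.Injective p →
            (∀ v, p v 2 = 0) →
            (∀ v u w : V, G.Adj v u → G.Adj v w → u ≠ w →
              c₁ / d ≤ angle (p u - p v) (p w - p v)) →
            ∃ α : Sym2 V → ℝ,
              (∀ e, α e ∈ Set.Icc 0 (π / 4)) ∧
              ∀ v u w : V, G.Adj v u → G.Adj v w → u ≠ w →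
                c₂ / Real.sqrt d ≤ angle
                  (arcTangentVec p α (EuclideanSpace.single 2 1) v u)
                  (arcTangentVec p α (EuclideanSpace.single 2 1) v w) := by
  intro c₁ hc₁
  have hπ := Real.pi_pos
  have hπ0 := Real.pi_ne_zero
  refine ⟨min (π/8) (c₁/4), lt_min (by linarith) (by linarith), ?_⟩
  intro V _ G _ d hd _ p hinj hp0 hres
  -- basic real facts about d and m
  have hd0 : (0:ℝ) < d := by exact_mod_cast Nat.lt_of_lt_of_le Nat.zero_lt_one hd
  have hs1 : (1:ℝ) ≤ Real.sqrt d := by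
    rw [show (1:ℝ) = Real.sqrt 1 by simp]
    exact Real.sqrt_le_sqrt (by exact_mod_cast hd)
  have hspos : (0:ℝ) < Real.sqrt d := by linarith
  have hss : Real.sqrt d * Real.sqrt d = d := Real.mul_self_sqrt hd0.le
  set m : ℕ := ⌈Real.sqrt d⌉₊ with hm
  have hms : Real.sqrt d ≤ (m:ℝ) := Nat.le_ceil _
  have hm2 : (m:ℝ) ≤ 2 * Real.sqrt d := by
    have := Nat.ceil_lt_add_one (Real.sqrt_nonneg (d:ℝ))
    linarith
  have hmpos : (0:ℝ) < m := by linarith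
  -- third coordinates of differences vanish
  have hsub2 : ∀ a b : V, (p b - p a) 2 = 0 := by
    intro a b
    rw [PiLp.sub_apply, hp0, hp0, sub_zero]
  -- the lift function
  set f : V → V → ℝ :=
    fun a b => π/4 * Int.fract ((m / π) * Complex.arg (myAux.toC (p b - p a))) with hf
  have hsymm : ∀ a b : V, f a b = f b a := by
    intro a b
    by_cases hab : p b - p a = 0
    · have hba : p a - p b = 0 := by
        rw [show p a - p b = -(p b - p a) by abel, hab, neg_zero]
      rw [hf]; simp only [hab, hba]
    · have hz : myAux.toC (p b - p a) ≠ 0 := fun h => hab (myAux.toC_eq_zero (hsub2 a b) h)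
      have hba : p a - p b = -(p b - p a) := by abel
      have harg : ((Complex.arg (-(myAux.toC (p b - p a)))) : Real.Angle)
          = ((Complex.arg (myAux.toC (p b - p a)) + π : ℝ) : Real.Angle) := by
        rw [Complex.arg_neg_coe_angle hz, Real.Angle.coe_add]
      obtain ⟨k, hk⟩ := Real.Angle.angle_eq_iff_two_pi_dvd_sub.mp harg
      rw [hf]
      simp only [hba, myAux.toC_neg]
      congr 1
      rw [eq_comm]
      apply Int.fract_eq_fract.mpr
      refine ⟨(m:ℤ) + 2 * m * k, ?_⟩
      have hexp : Complex.arg (-(myAux.toC (p b - p a)))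
          = Complex.arg (myAux.toC (p b - p a)) + π + 2 * π * k := by linarith
      rw [hexp]
      push_cast
      field_simp
      ring
  have hfval : ∀ a b : V, Sym2.lift ⟨f, hsymm⟩ s(a, b)
      = π/4 * Int.fract ((m / π) * Complex.arg (myAux.toC (p b - p a))) := fun a b => rfl
  refine ⟨Sym2.lift ⟨f, hsymm⟩, ?_, ?_⟩
  · intro e
    induction e using Sym2.ind with
    | _ a b =>
      rw [hfval a b]
      have h0 := Int.fract_nonneg ((m / π) * Complex.arg (myAux.toC (p b - p a)))
      have h1 := Int.fract_lt_one ((m / π) * Complex.arg (myAux.toC (p b - p a)))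
      constructor
      · positivity
      · nlinarith
  · intro v u w hvu hvw huw
    -- setup
    set w₁ : EuclideanSpace ℝ (Fin 3) := p u - p v with hw₁
    set w₂ : EuclideanSpace ℝ (Fin 3) := p w - p v with hw₂
    have hw₁0 : w₁ ≠ 0 := sub_ne_zero_of_ne (hinj.ne hvu.ne')
    have hw₂0 : w₂ ≠ 0 := sub_ne_zero_of_ne (hinj.ne hvw.ne')
    have hn₁ : (0:ℝ) < ‖w₁‖ := norm_pos_iff.mpr hw₁0
    have hn₂ : (0:ℝ) < ‖w₂‖ := norm_pos_iff.mpr hw₂0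
    set θ : ℝ := angle w₁ w₂ with hθ
    have hθlb : c₁ / d ≤ θ := hres v u w hvu hvw huw
    have hθpos : 0 < θ := lt_of_lt_of_le (by positivity) hθlb
    have hθπ : θ ≤ π := angle_le_pi _ _
    -- unit vectors and orthogonality
    set u₁ : EuclideanSpace ℝ (Fin 3) := ‖w₁‖⁻¹ • w₁ with hu₁
    set u₂ : EuclideanSpace ℝ (Fin 3) := ‖w₂‖⁻¹ • w₂ with hu₂
    set nv : EuclideanSpace ℝ (Fin 3) := EuclideanSpace.single 2 (1:ℝ) with hnv
    have hnorm1 : ‖u₁‖ = 1 := norm_smul_inv_norm (𝕜 := ℝ) hw₁0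
    have hnorm2 : ‖u₂‖ = 1 := norm_smul_inv_norm (𝕜 := ℝ) hw₂0
    have hnormn : ‖nv‖ = 1 := by rw [hnv, EuclideanSpace.norm_single]; norm_num
    have hperp : ∀ x : EuclideanSpace ℝ (Fin 3), x 2 = 0 → inner ℝ x nv = (0:ℝ) := by
      intro x hx
      rw [hnv, EuclideanSpace.inner_single_right, hx]
      simp
    have ho1 : inner ℝ u₁ nv = (0:ℝ) := by
      rw [hu₁, real_inner_smul_left, hperp w₁ (hsub2 v u), mul_zero]
    have ho2 : inner ℝ u₂ nv = (0:ℝ) := by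
      rw [hu₂, real_inner_smul_left, hperp w₂ (hsub2 v w), mul_zero]
    have hangleu : angle u₁ u₂ = θ := by
      rw [hu₁, hu₂, angle_smul_left_of_pos _ _ (inv_pos.mpr hn₁),
        angle_smul_right_of_pos _ _ (inv_pos.mpr hn₂)]
    -- the α values
    have ha₁ : Sym2.lift ⟨f, hsymm⟩ s(v, u)
        = π/4 * Int.fract ((m / π) * Complex.arg (myAux.toC w₁)) := hfval v u
    have ha₂ : Sym2.lift ⟨f, hsymm⟩ s(v, w)
        = π/4 * Int.fract ((m / π) * Complex.arg (myAux.toC w₂)) := hfval v w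
    set a₁ : ℝ := Sym2.lift ⟨f, hsymm⟩ s(v, u) with haa₁
    set a₂ : ℝ := Sym2.lift ⟨f, hsymm⟩ s(v, w) with haa₂
    have ha₁mem : a₁ ∈ Set.Icc 0 (π/4) := by
      rw [ha₁]
      have h0 := Int.fract_nonneg ((m / π) * Complex.arg (myAux.toC w₁))
      have h1 := Int.fract_lt_one ((m / π) * Complex.arg (myAux.toC w₁))
      exact ⟨by positivity, by nlinarith⟩
    have ha₂mem : a₂ ∈ Set.Icc 0 (π/4) := by
      rw [ha₂]
      have h0 := Int.fract_nonneg ((m / π) * Complex.arg (myAux.toC w₂))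
      have h1 := Int.fract_lt_one ((m / π) * Complex.arg (myAux.toC w₂))
      exact ⟨by positivity, by nlinarith⟩
    obtain ⟨hbound1, hbound2⟩ :=
      myAux.tangent_bounds u₁ u₂ nv hnorm1 hnorm2 hnormn ho1 ho2 ha₁mem ha₂mem
    have hTeq : arcTangentVec p (Sym2.lift ⟨f, hsymm⟩) nv v u
        = Real.cos a₁ • u₁ + Real.sin a₁ • nv := rfl
    have hTeq2 : arcTangentVec p (Sym2.lift ⟨f, hsymm⟩) nv v w
        = Real.cos a₂ • u₂ + Real.sin a₂ • nv := rfl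
    rw [hangleu] at hbound2
    rw [← hTeq, ← hTeq2] at hbound1 hbound2
    -- case split
    by_cases hcase : π / (2*m) ≤ θ
    · refine le_trans ?_ hbound2
      have h1 : min (π/8) (c₁/4) / Real.sqrt d ≤ (π/8) / Real.sqrt d := by
        apply div_le_div_of_nonneg_right (min_le_left _ _) hspos.le
      refine le_trans h1 ?_
      have h2 : (π/8) / Real.sqrt d ≤ π / (4*m) := by
        rw [div_le_div_iff₀ (by positivity) (by positivity)]
        nlinarith
      refine le_trans h2 ?_
      rw [div_le_iff₀ (by positivity)] at hcase ⊢
      nlinarith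
    · push_neg at hcase
      refine le_trans ?_ hbound1
      -- arithmetic relation between the fractional parts
      set t : ℝ := (m / π) * θ with ht
      have ht0 : 0 < t := by positivity
      have ht12 : t ≤ 1/2 := by
        rw [ht]
        rw [lt_div_iff₀ (by positivity)] at hcase
        rw [div_mul_eq_mul_div, div_le_iff₀ hπ]
        nlinarith
      have hcos : Real.cos θ
          = Real.cos (Complex.arg (myAux.toC w₁) - Complex.arg (myAux.toC w₂)) :=
        myAux.cos_angle_eq_cos_arg_sub hw₁0 hw₂0 (hsub2 v u) (hsub2 v w)
      have hdisj : (∃ j : ℤ, (m / π) * Complex.arg (myAux.toC w₁)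
            - (m / π) * Complex.arg (myAux.toC w₂) - t = j)
          ∨ (∃ j : ℤ, (m / π) * Complex.arg (myAux.toC w₁)
            - (m / π) * Complex.arg (myAux.toC w₂) + t = j) := by
        obtain ⟨k, hk | hk⟩ := Real.cos_eq_cos_iff.mp hcos
        · left
          refine ⟨2 * k * m, ?_⟩
          have hsub : Complex.arg (myAux.toC w₁)
              = Complex.arg (myAux.toC w₂) + 2*k*π + θ := by linarith
          rw [ht, hsub]
          push_cast
          field_simp
          ring
        · right
          refine ⟨2 * k * m, ?_⟩
          have hsub : Complex.arg (myAux.toC w₁)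
              = Complex.arg (myAux.toC w₂) + 2*k*π - θ := by linarith
          rw [ht, hsub]
          push_cast
          field_simp
          ring
      have hfr : t ≤ |Int.fract ((m / π) * Complex.arg (myAux.toC w₁))
          - Int.fract ((m / π) * Complex.arg (myAux.toC w₂))| :=
        myAux.fract_dist ht0 ht12 hdisj
      have htt : π/4 * t = (m:ℝ) * θ / 4 := by
        rw [ht]; field_simp
      have hcd : c₁ ≤ θ * d := (div_le_iff₀ hd0).mp hθlb
      calc min (π/8) (c₁/4) / Real.sqrt d ≤ (c₁/4) / Real.sqrt d :=
            div_le_div_of_nonneg_right (min_le_right _ _) hspos.le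
        _ ≤ π/4 * t := by
            rw [htt, div_le_iff₀ hspos]
            nlinarith [mul_le_mul_of_nonneg_right hms hθpos.le]
        _ ≤ |a₁ - a₂| := by
            rw [ha₁, ha₂, ← mul_sub, abs_mul, abs_of_pos (show (0:ℝ) < π/4 by positivity)]
            nlinarith [hfr]
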